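/- Let (V, ω) be a finite-dimensional real symplectic vector space and A : V → V a linear involution with ω(Av, Aw) = -ω(v,w). Then there exists an ω-compatible complex structure J on V satisfying A ∘ J = -J ∘ A. -/

import Mathlib

private lemma bilin_expand {V : Type*} [AddCommGroup V] [Module ℝ V]
    {κ : Type*} [Fintype κ] (B : Module.Basis κ ℝ V) (ω : V →ₗ[ℝ] V →ₗ[ℝ] ℝ)
    (f g : V →ₗ[ℝ] V) (v w : V) :
    ω (f v) (g w) = ∑ k, ∑ l, B.repr v k * B.repr w l * ω (f (B k)) (g (B l)) := by
  conv_lhs => rw [← B.sum_repr v, ← B.sum_repr w]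
  simp only [map_sum, map_smul, LinearMap.sum_apply, LinearMap.smul_apply, smul_eq_mul]
  rw [Finset.sum_comm]
  refine Finset.sum_congr rfl fun k _ => ?_
  rw [Finset.mul_sum]
  refine Finset.sum_congr rfl fun l _ => by ring

set_option maxHeartbeats 1600000 in
/-- For any linear anti-symplectic involution `A` of a finite-dimensional
symplectic vector space `(V, ω)` there exists an `ω`-compatible complex
structure `J` anticommuting with `A`. -/
theorem exists_compatible_anticommuting_J
    (V : Type*) [AddCommGroup V] [Module ℝ V] [FiniteDimensional ℝ V]
    (ω : V →ₗ[ℝ] V →ₗ[ℝ] ℝ)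
    (halt : ∀ v : V, ω v v = 0)
    (hnd : ∀ v : V, (∀ w : V, ω v w = 0) → v = 0)
    (A : V →ₗ[ℝ] V) (hA : A ∘ₗ A = LinearMap.id)
    (hanti : ∀ v w : V, ω (A v) (A w) = - ω v w) :
    ∃ J : V →ₗ[ℝ] V,
      J ∘ₗ J = - LinearMap.id ∧
      (∀ v w : V, ω (J v) (J w) = ω v w) ∧
      (∀ v : V, v ≠ 0 → 0 < ω v (J v)) ∧
      A ∘ₗ J = -(J ∘ₗ A) := by
  classical
  -- skew-symmetry
  have hskew : ∀ v w : V, ω v w = - ω w v := by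
    intro v w
    have h := halt (v + w)
    simp only [map_add, LinearMap.add_apply, halt] at h
    linarith
  -- eigenspaces
  set P : Submodule ℝ V := LinearMap.ker (A - LinearMap.id) with hP
  set N : Submodule ℝ V := LinearMap.ker (A + LinearMap.id) with hN
  have memP : ∀ x : V, x ∈ P ↔ A x = x := by
    intro x; simp [hP, LinearMap.mem_ker, sub_eq_zero]
  have memN : ∀ x : V, x ∈ N ↔ A x = -x := by
    intro x
    simp only [hN, LinearMap.mem_ker, LinearMap.add_apply, LinearMap.id_apply]
    constructor
    · intro h; exact eq_neg_of_add_eq_zero_left h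
    · intro h; rw [h]; abel
  have hAA : ∀ x : V, A (A x) = x := fun x => congrArg (fun f => f x) hA
  have hcompl : IsCompl P N := by
    constructor
    · rw [disjoint_iff_inf_le]
      intro x hx
      have h1 : A x = x := (memP x).1 hx.1
      have h2 : A x = -x := (memN x).1 hx.2
      have hxx : x = -x := h1.symm.trans h2
      have h2x : (2:ℝ) • x = 0 := by
        rw [two_smul]; nth_rewrite 1 [hxx]; abel
      have : x = 0 := by
        rcases smul_eq_zero.mp h2x with h | h
        · norm_num at h
        · exact h
      simp [this]
    · rw [codisjoint_iff_le_sup]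
      intro x _
      have h1 : ((1:ℝ)/2) • (x + A x) ∈ P := by
        rw [memP]; simp only [map_smul, map_add, hAA]; rw [add_comm]
      have h2 : ((1:ℝ)/2) • (x - A x) ∈ N := by
        rw [memN]; simp only [map_smul, map_sub, hAA, smul_sub, smul_add]
        module
      have hx : x = ((1:ℝ)/2) • (x + A x) + ((1:ℝ)/2) • (x - A x) := by module
      rw [hx]
      exact Submodule.add_mem_sup h1 h2
  -- ω vanishes on P and on N
  have hPP : ∀ p q : V, p ∈ P → q ∈ P → ω p q = 0 := by
    intro p q hp hq
    have := hanti p q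
    rw [(memP p).1 hp, (memP q).1 hq] at this
    linarith
  have hNN : ∀ p q : V, p ∈ N → q ∈ N → ω p q = 0 := by
    intro p q hp hq
    have := hanti p q
    rw [(memN p).1 hp, (memN q).1 hq] at this
    simp only [map_neg, LinearMap.neg_apply, neg_neg] at this
    linarith
  -- pairing maps
  set T : N →ₗ[ℝ] Module.Dual ℝ P :=
    P.subtype.dualMap ∘ₗ ω.flip ∘ₗ N.subtype with hT
  have hTapp : ∀ (f : N) (p : P), T f p = ω (p : V) (f : V) := by
    intro f p; rfl
  have hTinj : Function.Injective T := by
    rw [← LinearMap.ker_eq_bot, LinearMap.ker_eq_bot']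
    intro f hf
    have hf' : ∀ p : P, ω (p : V) (f : V) = 0 := by
      intro p
      exact congrArg (fun g => g p) hf
    have : (f : V) = 0 := by
      apply hnd
      intro w
      obtain ⟨p, n, hp, hn, rfl⟩ : ∃ p n : V, p ∈ P ∧ n ∈ N ∧ w = p + n := by
        have := hcompl.sup_eq_top
        have hw : w ∈ P ⊔ N := by rw [this]; trivial
        obtain ⟨p, hp, n, hn, h⟩ := Submodule.mem_sup.1 hw
        exact ⟨p, n, hp, hn, h.symm⟩
      rw [map_add]
      have e1 : ω (f : V) p = 0 := by
        rw [hskew]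
        have := hf' ⟨p, hp⟩
        simp only [Submodule.coe_mk] at this
        rw [this, neg_zero]
      have e2 : ω (f : V) n = 0 := hNN _ _ f.2 hn
      rw [e1, e2, add_zero]
    ext; exact congrArg Subtype.val (Subtype.ext this)
  set S : P →ₗ[ℝ] Module.Dual ℝ N :=
    N.subtype.dualMap ∘ₗ ω ∘ₗ P.subtype with hS
  have hSinj : Function.Injective S := by
    rw [← LinearMap.ker_eq_bot, LinearMap.ker_eq_bot']
    intro p hp
    have hp' : ∀ n : N, ω (p : V) (n : V) = 0 := by
      intro n
      exact congrArg (fun g => g n) hp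
    have : (p : V) = 0 := by
      apply hnd
      intro w
      obtain ⟨q, n, hq, hn, rfl⟩ : ∃ q n : V, q ∈ P ∧ n ∈ N ∧ w = q + n := by
        have := hcompl.sup_eq_top
        have hw : w ∈ P ⊔ N := by rw [this]; trivial
        obtain ⟨q, hq, n, hn, h⟩ := Submodule.mem_sup.1 hw
        exact ⟨q, n, hq, hn, h.symm⟩
      rw [map_add]
      have e1 : ω (p : V) q = 0 := hPP _ _ p.2 hq
      have e2 : ω (p : V) n = 0 := hp' ⟨n, hn⟩
      rw [e1, e2, add_zero]
    ext; exact congrArg Subtype.val (Subtype.ext this)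
  -- equal dimensions
  have hdim : Module.finrank ℝ N = Module.finrank ℝ P := by
    have h1 : Module.finrank ℝ N ≤ Module.finrank ℝ (Module.Dual ℝ P) :=
      LinearMap.finrank_le_finrank_of_injective hTinj
    have h2 : Module.finrank ℝ P ≤ Module.finrank ℝ (Module.Dual ℝ N) :=
      LinearMap.finrank_le_finrank_of_injective hSinj
    rw [Subspace.dual_finrank_eq] at h1 h2
    omega
  have hdim' : Module.finrank ℝ N = Module.finrank ℝ (Module.Dual ℝ P) := by
    rw [Subspace.dual_finrank_eq]; exact hdim
  set Teq : N ≃ₗ[ℝ] Module.Dual ℝ P :=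
    LinearEquiv.ofBijective T ⟨hTinj, by
      have := (LinearMap.injective_iff_surjective_of_finrank_eq_finrank hdim').1 hTinj
      exact this⟩ with hTeq
  -- bases
  set ι := Fin (Module.finrank ℝ P)
  set b : Module.Basis ι ℝ P := Module.finBasis ℝ P with hb
  set F : Module.Basis ι ℝ N := b.dualBasis.map Teq.symm with hF
  have hpair : ∀ i j : ι, ω (b i : V) (F j : V) = if i = j then 1 else 0 := by
    intro i j
    have h1 : Teq (F j) = b.dualBasis j := by
      rw [hF, Module.Basis.map_apply, LinearEquiv.apply_symm_apply]
    have h2 : Teq (F j) (b i) = ω (b i : V) (F j : V) := rfl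
    rw [← h2, h1, Module.Basis.dualBasis_apply_self]
  -- combined basis
  set e : (P × N) ≃ₗ[ℝ] V := Submodule.prodEquivOfIsCompl P N hcompl with he
  set Bas : Module.Basis (ι ⊕ ι) ℝ V := (b.prod F).map e with hBas
  have hBasL : ∀ i : ι, Bas (Sum.inl i) = (b i : V) := by
    intro i
    rw [hBas, Module.Basis.map_apply]
    have : (b.prod F) (Sum.inl i) = (b i, 0) := by
      ext <;> simp [Module.Basis.prod_apply]
    rw [this, he, Submodule.coe_prodEquivOfIsCompl']
    simp
  have hBasR : ∀ i : ι, Bas (Sum.inr i) = (F i : V) := by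
    intro i
    rw [hBas, Module.Basis.map_apply]
    have : (b.prod F) (Sum.inr i) = (0, F i) := by
      ext <;> simp [Module.Basis.prod_apply]
    rw [this, he, Submodule.coe_prodEquivOfIsCompl']
    simp
  -- define J
  set Jtarget : ι ⊕ ι → V := Sum.elim (fun i => (F i : V)) (fun i => -(b i : V)) with hJt
  set J : V →ₗ[ℝ] V := Bas.constr ℝ Jtarget with hJ
  have hJL : ∀ i : ι, J (Bas (Sum.inl i)) = (F i : V) := by
    intro i; rw [hJ, Module.Basis.constr_basis]; rfl
  have hJR : ∀ i : ι, J (Bas (Sum.inr i)) = -(b i : V) := by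
    intro i; rw [hJ, Module.Basis.constr_basis]; rfl
  -- ω on basis pairs
  have hωLL : ∀ i j : ι, ω (Bas (Sum.inl i)) (Bas (Sum.inl j)) = 0 := by
    intro i j; rw [hBasL, hBasL]; exact hPP _ _ (b i).2 (b j).2
  have hωRR : ∀ i j : ι, ω (Bas (Sum.inr i)) (Bas (Sum.inr j)) = 0 := by
    intro i j; rw [hBasR, hBasR]; exact hNN _ _ (F i).2 (F j).2
  have hωLR : ∀ i j : ι, ω (Bas (Sum.inl i)) (Bas (Sum.inr j)) = if i = j then 1 else 0 := by
    intro i j; rw [hBasL, hBasR]; exact hpair i j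
  have hωRL : ∀ i j : ι, ω (Bas (Sum.inr i)) (Bas (Sum.inl j)) = if i = j then -1 else 0 := by
    intro i j; rw [hBasR, hBasL, hskew, hpair]
    simp only [eq_comm]
    split <;> simp
  -- ω (J basis) (J basis) = ω basis basis
  have hJtab : ∀ k l : ι ⊕ ι, ω (J (Bas k)) (J (Bas l)) = ω (Bas k) (Bas l) := by
    rintro (i | i) (j | j)
    · rw [hJL, hJL, ← hBasR i, ← hBasR j, hωRR, hωLL]
    · rw [hJL, hJR]
      simp only [map_neg, LinearMap.neg_apply, neg_neg]
      rw [← hBasR i, ← hBasL j, hωRL, hωLR]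
      split <;> simp
    · rw [hJR, hJL]
      simp only [map_neg, LinearMap.neg_apply, neg_neg]
      rw [← hBasL i, ← hBasR j, hωLR, hωRL]
      split <;> simp
    · rw [hJR, hJR]
      simp only [map_neg, LinearMap.neg_apply, neg_neg]
      rw [← hBasL i, ← hBasL j, hωLL, hωRR]
  -- ω (basis) (J basis) = identity matrix
  have hpos_tab : ∀ k l : ι ⊕ ι, ω (Bas k) (J (Bas l)) = if k = l then 1 else 0 := by
    rintro (i | i) (j | j)
    · rw [hJL, ← hBasR j, hωLR]
      simp
    · rw [hJR]
      simp only [map_neg]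
      rw [← hBasL j, hωLL]
      simp
    · rw [hJL, ← hBasR j, hωRR]
      simp
    · rw [hJR]
      simp only [map_neg]
      rw [← hBasL j, hωRL]
      by_cases h : i = j <;> simp [h]
  refine ⟨J, ?_, ?_, ?_, ?_⟩
  · -- J ∘ J = -id
    apply Bas.ext
    rintro (i | i) <;>
      simp only [LinearMap.comp_apply, LinearMap.neg_apply, LinearMap.id_apply]
    · rw [hJL, ← hBasR i, hJR, hBasL]
    · rw [hJR, map_neg, ← hBasL i, hJL, ← hBasR i]
  · -- compatibility
    intro v w
    have h1 := bilin_expand Bas ω J J v w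
    have h2 := bilin_expand Bas ω LinearMap.id LinearMap.id v w
    simp only [LinearMap.id_apply] at h2
    rw [h1, h2]
    exact Finset.sum_congr rfl fun k _ => Finset.sum_congr rfl fun l _ => by rw [hJtab]
  · -- positivity
    intro v hv
    have h0 := bilin_expand Bas ω LinearMap.id J v v
    simp only [LinearMap.id_apply] at h0
    rw [h0]
    have hcol : ∀ k ∈ Finset.univ, ∑ l, Bas.repr v k * Bas.repr v l * ω (Bas k) (J (Bas l)) =
        Bas.repr v k * Bas.repr v k := by
      intro k _
      rw [Finset.sum_eq_single k]
      · rw [hpos_tab]; simp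
      · intro l _ hl; rw [hpos_tab]; simp [Ne.symm hl]
      · simp
    rw [Finset.sum_congr rfl hcol]
    have hvne : Bas.repr v ≠ 0 := fun hrepr => hv (Bas.repr.map_eq_zero_iff.mp hrepr)
    obtain ⟨k, hk⟩ := Finsupp.ne_iff.1 hvne
    simp only [Finsupp.coe_zero, Pi.zero_apply] at hk
    apply Finset.sum_pos'
    · intro k _; exact mul_self_nonneg _
    · exact ⟨k, Finset.mem_univ k, mul_self_pos.mpr hk⟩
  · -- anticommuting
    apply Bas.ext
    rintro (i | i) <;>
      simp only [LinearMap.comp_apply, LinearMap.neg_apply]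
    · have hAb : A (Bas (Sum.inl i)) = Bas (Sum.inl i) := by
        rw [hBasL]; exact (memP _).1 (b i).2
      rw [hJL, hAb, hJL, (memN ((F i : V))).1 (F i).2]
    · have hAF : A (Bas (Sum.inr i)) = -(Bas (Sum.inr i)) := by
        rw [hBasR]; exact (memN _).1 (F i).2
      rw [hJR, hAF]
      simp only [map_neg, neg_neg]
      rw [hJR, (memP ((b i : V))).1 (b i).2]
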